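/- Let A be a left brace. Then A is a one-generator left brace of multipermutation level 2 if and only if A has a transitive cycle base X with |X| > 1 such that the cycle set (X, x·y := λ_x^{-1}(y)) is an indecomposable cycle set of multipermutation level 1 (equivalently, the restrictions λ_x|_X coincide for all x ∈ X). -/

import Mathlib

/-- A left brace structure on a type carrying an abelian additive group structure `+`
and a (multiplicative) group structure `∘` (written `*`). -/
class LeftBrace (A : Type*) [AddCommGroup A] [Group A] : Prop where
  compat : ∀ a b c : A, a * (b + c) + a = a * b + a * c

section Brace

variable {A : Type*} [AddCommGroup A] [Group A]

/-- The map `λ_a : b ↦ -a + a ∘ b`, as a permutation of `A`. -/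
def lam (a : A) : Equiv.Perm A where
  toFun b := -a + a * b
  invFun b := a⁻¹ * (a + b)
  left_inv b := by simp
  right_inv b := by simp

/-- A subset of a left brace is a sub-left-brace if it is simultaneously (the carrier of)
a subgroup of `(A,+)` and a subgroup of `(A,∘)`. -/
def IsSubBrace (B : Set A) : Prop :=
  ∃ (Sa : AddSubgroup A) (Sm : Subgroup A), (Sa : Set A) = B ∧ (Sm : Set A) = B

/-- `A(x)`: the smallest sub-left-brace containing `x`. -/
def braceClosure (x : A) : Set A := ⋂₀ {B : Set A | IsSubBrace B ∧ x ∈ B}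

end Brace

/-- The socle series of a left brace: `Soc_0 = {0}`,
`Soc_{n+1} = {a | ∀ b, a + b - a∘b ∈ Soc_n}`. -/
def socSeq (A : Type*) [AddCommGroup A] [Group A] : ℕ → Set A
  | 0 => {0}
  | n + 1 => {a | ∀ b, a + b - a * b ∈ socSeq A n}

/-- A left brace has multipermutation level `n` if `n` is minimal with `Soc_n(A) = A`. -/
def BraceMPL (A : Type*) [AddCommGroup A] [Group A] (n : ℕ) : Prop :=
  socSeq A n = Set.univ ∧ ∀ m < n, socSeq A m ≠ Set.univ

structure CycleSet (X : Type*) where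
  mul : X → X → X
  mul_bijective : ∀ x, Function.Bijective (mul x)
  cycloid : ∀ x y z, mul (mul x y) (mul x z) = mul (mul y x) (mul y z)
  nondeg : Function.Bijective (fun x => mul x x)

namespace CycleSet

variable {X : Type*}

/-- The left multiplication `σ_x` as a permutation of `X`. -/
noncomputable def sigma (C : CycleSet X) (x : X) : Equiv.Perm X :=
  Equiv.ofBijective (C.mul x) (C.mul_bijective x)

/-- The permutation group `𝒢(X)` of a cycle set. -/
noncomputable def G (C : CycleSet X) : Subgroup (Equiv.Perm X) :=
  Subgroup.closure (Set.range C.sigma)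

/-- A cycle set is indecomposable if `𝒢(X)` acts transitively on `X`. -/
def Indecomposable (C : CycleSet X) : Prop := ∀ x y : X, ∃ g ∈ C.G, g x = y

/-- A cycle set is uniconnected if `𝒢(X)` acts regularly on `X`. -/
def Uniconnected (C : CycleSet X) : Prop :=
  ∀ x y : X, ∃! g : Equiv.Perm X, g ∈ C.G ∧ g x = y

/-- `MPLrel C n a b` holds iff `a`, `b` have the same image in the `n`-th iterated
retraction `Ret^n(X)`. -/
def MPLrel (C : CycleSet X) : ℕ → X → X → Prop
  | 0 => Eq
  | n + 1 => fun a b => ∀ z, MPLrel C n (C.mul a z) (C.mul b z)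

/-- A cycle set has multipermutation level `n` if `n` is minimal with `|Ret^n(X)| = 1`. -/
def MPL (C : CycleSet X) (n : ℕ) : Prop :=
  (∀ a b, MPLrel C n a b) ∧ ∀ m < n, ∃ a b, ¬ MPLrel C m a b

end CycleSet

/-- `𝒜` is the system of blocks generated by a block `B` for the subgroup `G` of `Sym(Z)`. -/
def IsBlockSystem {Z : Type*} (G : Subgroup (Equiv.Perm Z)) (𝒜 : Set (Set Z)) : Prop :=
  ∃ B : Set Z, B.Nonempty ∧
    (∀ g ∈ G, (⇑g) '' B = B ∨ Disjoint ((⇑g) '' B) B) ∧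
    𝒜 = {A | ∃ g ∈ G, A = (⇑g) '' B}

/-- Two systems of blocks are orthogonal if any two members meet in exactly one point. -/
def OrthSystems {Z : Type*} (𝒜 ℬ : Set (Set Z)) : Prop :=
  ∀ A ∈ 𝒜, ∀ B ∈ ℬ, ∃ z, A ∩ B = {z}

/-- The system of blocks `𝓑_X = {{x} × S : x ∈ X}` on `X × S`. -/
def BXblocks (X S : Type*) : Set (Set (X × S)) :=
  {B | ∃ x : X, B = {p : X × S | p.1 = x}}

/-- The system of blocks `{X × {s} : s ∈ S}` on `X × S`. -/
def SBlocks (X S : Type*) : Set (Set (X × S)) :=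
  {B | ∃ s : S, B = {p : X × S | p.2 = s}}

/-- The system of blocks formed by the classes of the retract relation. -/
def RetBlocks {X : Type*} (C : CycleSet X) : Set (Set X) :=
  {B | ∃ x : X, B = {y : X | ∀ z, C.mul y z = C.mul x z}}


section Helpers
set_option linter.unusedSectionVars false
variable {A : Type*} [AddCommGroup A] [Group A] [LeftBrace A]

lemma lam_apply (a b : A) : lam a b = -a + a * b := rfl

lemma lb_mul_add (a b c : A) : a * (b + c) = a * b + a * c - a := by
  rw [eq_sub_iff_add_eq]; exact LeftBrace.compat a b c

lemma lb_mul_zero (a : A) : a * (0 : A) = a := by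
  have h := LeftBrace.compat a 0 0
  rw [add_zero] at h
  exact (add_left_cancel h).symm

lemma lb_one_eq_zero : (1 : A) = 0 := by
  have := lb_mul_zero (1 : A)
  rw [one_mul] at this
  exact this.symm

lemma lb_mul_neg (a b : A) : a * (-b) = a + a - a * b := by
  have h := LeftBrace.compat a b (-b)
  rw [add_neg_cancel, lb_mul_zero] at h
  rw [eq_sub_iff_add_eq, add_comm]
  exact h.symm

lemma lb_mul_eq (a b : A) : a * b = a + lam a b := by
  rw [lam_apply]; abel

lemma lam_add_apply (a b c : A) : lam a (b + c) = lam a b + lam a c := by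
  simp only [lam_apply, lb_mul_add]; abel

lemma lam_zero_apply (a : A) : lam a 0 = 0 := by
  rw [lam_apply, lb_mul_zero]; abel

lemma lam_neg_apply (a b : A) : lam a (-b) = -lam a b := by
  have h := lam_add_apply a b (-b)
  rw [add_neg_cancel, lam_zero_apply] at h
  exact (neg_eq_of_add_eq_zero_right h.symm).symm

lemma lam_mul (a b : A) : lam (a * b) = lam a * lam b := by
  ext c
  rw [Equiv.Perm.mul_apply]
  simp only [lam_apply, lb_mul_add, lb_mul_neg, mul_assoc]
  abel

lemma lam_one : lam (1 : A) = 1 := by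
  ext c
  rw [lam_apply, one_mul, lb_one_eq_zero]
  simp

lemma lam_zero : lam (0 : A) = 1 := by rw [← lb_one_eq_zero, lam_one]

lemma lam_inv (a : A) : lam a⁻¹ = (lam a)⁻¹ := by
  apply eq_inv_of_mul_eq_one_left
  rw [← lam_mul, inv_mul_cancel, lam_one]

lemma lam_symm (a : A) : (lam a).symm = lam a⁻¹ := by
  rw [lam_inv]; rfl

lemma lam_symm_apply (a b : A) : (lam a).symm b = lam a⁻¹ b := by rw [lam_symm]

lemma mul_lam_symm (a b : A) : a * (lam a).symm b = a + b := by
  rw [lb_mul_eq a ((lam a).symm b), Equiv.apply_symm_apply]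

lemma lam_add (a b : A) : lam (a + b) = lam a * lam ((lam a).symm b) := by
  rw [← mul_lam_symm a b, lam_mul]

lemma lam_add' (a b : A) : lam (a + b) = lam a * lam (lam a⁻¹ b) := by
  rw [lam_add, lam_symm]

lemma lb_inv_eq (a : A) : lam a⁻¹ (-a) = a⁻¹ := by
  rw [lam_apply, lb_mul_neg, inv_mul_cancel, lb_one_eq_zero]
  abel

lemma lam_inv_self (a : A) : lam a⁻¹ a = -a⁻¹ := by
  have h := lb_inv_eq a
  rw [lam_neg_apply] at h
  exact neg_eq_iff_eq_neg.mp h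

lemma cyc_key (a b c : A) :
    (lam ((lam a).symm b)).symm ((lam a).symm c) = (lam (a + b)).symm c := by
  apply Equiv.injective (lam ((lam a).symm b))
  rw [Equiv.apply_symm_apply]
  apply Equiv.injective (lam a)
  rw [Equiv.apply_symm_apply, ← Equiv.Perm.mul_apply, ← lam_add, Equiv.apply_symm_apply]

lemma lam_lam_of (hsoc : ∀ a b : A, lam (b - lam a b) = 1) (a b : A) :
    lam (lam a b) = lam b := by
  have h1 : (b - lam a b) + lam a b = b := by abel
  have h2 := lam_add' (b - lam a b) (lam a b)
  rw [h1, hsoc a b] at h2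
  have h3 : lam (b - lam a b)⁻¹ (lam a b) = lam a b := by
    rw [lam_inv, hsoc a b]; simp
  rw [h3, one_mul] at h2
  exact h2.symm

lemma lam_addhom_of (hsoc : ∀ a b : A, lam (b - lam a b) = 1) (a b : A) :
    lam (a + b) = lam a * lam b := by
  rw [lam_add' a b, lam_lam_of hsoc]

lemma lam_neghom_of (hsoc : ∀ a b : A, lam (b - lam a b) = 1) (a : A) :
    lam (-a) = (lam a)⁻¹ :=
  eq_inv_of_mul_eq_one_left (by rw [← lam_addhom_of hsoc, neg_add_cancel, lam_zero])

lemma mem_range_lam {e : A} (a x : A) (hx : x ∈ Set.range fun b : A => lam b e) :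
    lam a x ∈ Set.range fun b : A => lam b e := by
  obtain ⟨b, rfl⟩ := hx
  refine ⟨a * b, ?_⟩
  show lam (a * b) e = lam a (lam b e)
  rw [lam_mul]; rfl

lemma lam_ext_of_closure {X : Set A} (hcl : AddSubgroup.closure X = ⊤) {a b : A}
    (h : ∀ z ∈ X, lam a z = lam b z) : lam a = lam b := by
  ext c
  have hc : c ∈ AddSubgroup.closure X := by rw [hcl]; trivial
  induction hc using AddSubgroup.closure_induction with
  | mem z hz => exact h z hz
  | zero => rw [lam_zero_apply, lam_zero_apply]
  | add x y _ _ hx hy => rw [lam_add_apply, lam_add_apply, hx, hy]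
  | neg x _ hx => rw [lam_neg_apply, lam_neg_apply, hx]

lemma soc_of_base {X : Set A} {e : A} (hXe : X = Set.range fun a : A => lam a e)
    (hcl : AddSubgroup.closure X = ⊤)
    (hone : ∀ x ∈ X, ∀ y ∈ X, lam x = lam y) :
    ∀ a b : A, lam (b - lam a b) = 1 := by
  have hinv : ∀ (a : A) ⦃x⦄, x ∈ X → lam a x ∈ X := by
    subst hXe; intro a x hx; exact mem_range_lam a x hx
  have hBstep : ∀ (a : A), ∀ x ∈ X, lam (a + x) = lam a * lam x := by
    intro a x hx
    rw [lam_add' a x, hone _ (hinv a⁻¹ hx) _ hx]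
  have hadd : ∀ b a : A, lam (a + b) = lam a * lam b := by
    intro b
    have hb : b ∈ AddSubgroup.closure X := by rw [hcl]; trivial
    induction hb using AddSubgroup.closure_induction with
    | mem x hx => intro a; exact hBstep a x hx
    | zero => intro a; rw [add_zero, lam_zero, mul_one]
    | add x y _ _ hx hy =>
      intro a
      calc lam (a + (x + y)) = lam ((a + x) + y) := by rw [add_assoc]
        _ = lam (a + x) * lam y := hy _
        _ = lam a * lam x * lam y := by rw [hx]
        _ = lam a * lam (x + y) := by rw [hy x, mul_assoc]
    | neg x _ hx =>
      intro a
      have hnx : lam (-x) = (lam x)⁻¹ := by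
        have h := hx (-x)
        rw [neg_add_cancel, lam_zero] at h
        exact eq_inv_of_mul_eq_one_left h.symm
      have h2 := hx (a + -x)
      rw [add_assoc, neg_add_cancel, add_zero] at h2
      rw [hnx]
      exact eq_mul_inv_iff_mul_eq.mpr h2.symm
  have hneg : ∀ c : A, lam (-c) = (lam c)⁻¹ := fun c =>
    eq_inv_of_mul_eq_one_left (by rw [← hadd c (-c), neg_add_cancel, lam_zero])
  have hlamlam : ∀ a b : A, lam (lam a b) = lam b := by
    intro a b
    have hb : b ∈ AddSubgroup.closure X := by rw [hcl]; trivial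
    induction hb using AddSubgroup.closure_induction with
    | mem x hx => exact hone _ (hinv a hx) _ hx
    | zero => rw [lam_zero_apply]
    | add x y _ _ hx hy =>
      rw [lam_add_apply, hadd (lam a y) (lam a x), hx, hy, ← hadd y x]
    | neg x _ hx => rw [lam_neg_apply, hneg, hx, ← hneg]
  intro a b
  rw [sub_eq_add_neg, hadd, hneg, hlamlam, mul_inv_cancel]

end Helpers
section SocBridge
set_option linter.unusedSectionVars false
variable {A : Type*} [AddCommGroup A] [Group A] [LeftBrace A]

lemma hsoc_of_soc2 (h2 : socSeq A 2 = Set.univ) : ∀ a b : A, lam (b - lam a b) = 1 := by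
  intro a b
  have ha : a ∈ socSeq A 2 := by rw [h2]; trivial
  have hc : a + b - a * b ∈ socSeq A 1 := ha b
  have hcb : a + b - a * b = b - lam a b := by rw [lb_mul_eq]; abel
  rw [hcb] at hc
  ext d
  have h3 : (b - lam a b) + d - (b - lam a b) * d = 0 := hc d
  rw [lb_mul_eq] at h3
  have h4 : d - lam (b - lam a b) d = 0 := by rw [← h3]; abel
  have := sub_eq_zero.mp h4
  simpa using this.symm

lemma soc2_of_hsoc (hsoc : ∀ a b : A, lam (b - lam a b) = 1) : socSeq A 2 = Set.univ := by
  rw [Set.eq_univ_iff_forall]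
  intro a
  show ∀ b, a + b - a * b ∈ socSeq A 1
  intro b
  show ∀ d, (a + b - a * b) + d - (a + b - a * b) * d ∈ socSeq A 0
  intro d
  have hcb : a + b - a * b = b - lam a b := by rw [lb_mul_eq]; abel
  rw [hcb, lb_mul_eq]
  have hd : lam (b - lam a b) d = d := by rw [hsoc]; rfl
  rw [hd]
  show _ ∈ ({0} : Set A)
  simp

end SocBridge

/-- A left brace `A` is a one-generator left brace of multipermutation
level 2 iff it has a transitive cycle base `X` with `|X| > 1` such that the cycle set
`(X, x·y := λ_x^{-1}(y))` is indecomposable of multipermutation level 1. -/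
theorem stmt17 {A : Type} [AddCommGroup A] [Group A] [LeftBrace A] :
    ((∃ x : A, braceClosure x = Set.univ) ∧ BraceMPL A 2) ↔
      ∃ X : Set A,
        (∃ e ∈ X, X = Set.range fun a : A => lam a e) ∧
        AddSubgroup.closure X = ⊤ ∧
        X.Nontrivial ∧
        ∃ C : CycleSet ↥X,
          (∀ x y : ↥X, ((C.mul x y : ↥X) : A) = (lam (x : A)).symm (y : A)) ∧
          C.Indecomposable ∧ C.MPL 1 := by
  constructor
  · rintro ⟨⟨x₀, hx₀⟩, hmpl2⟩
    have hm2 : socSeq A 2 = Set.univ := hmpl2.1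
    have hmlt : ∀ m < 2, socSeq A m ≠ Set.univ := hmpl2.2
    have hsoc : ∀ a b : A, lam (b - lam a b) = 1 := hsoc_of_soc2 hm2
    have lamlam : ∀ a b : A, lam (lam a b) = lam b := lam_lam_of hsoc
    have ladd : ∀ a b : A, lam (a + b) = lam a * lam b := lam_addhom_of hsoc
    have lneg : ∀ a : A, lam (-a) = (lam a)⁻¹ := lam_neghom_of hsoc
    set X : Set A := Set.range (fun a : A => lam a x₀) with hXdef
    have hx0X : x₀ ∈ X := ⟨0, by show lam 0 x₀ = x₀; rw [lam_zero]; rfl⟩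
    have hinvX : ∀ (a : A) ⦃x⦄, x ∈ X → lam a x ∈ X := fun a x hx => mem_range_lam a x hx
    have hlam_mem : ∀ (a : A) ⦃b⦄, b ∈ AddSubgroup.closure X → lam a b ∈ AddSubgroup.closure X := by
      intro a b hb
      induction hb using AddSubgroup.closure_induction with
      | mem x hx => exact AddSubgroup.subset_closure (hinvX a hx)
      | zero => rw [lam_zero_apply]; exact zero_mem _
      | add x y _ _ hx hy => rw [lam_add_apply]; exact add_mem hx hy
      | neg x _ hx => rw [lam_neg_apply]; exact neg_mem hx
    have hcl : AddSubgroup.closure X = ⊤ := by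
      set S := AddSubgroup.closure X with hSdef
      let Sm : Subgroup A :=
        { carrier := (S : Set A)
          mul_mem' := by
            intro a b ha hb
            show a * b ∈ S
            rw [lb_mul_eq]
            exact add_mem ha (hlam_mem a hb)
          one_mem' := by
            show (1 : A) ∈ S
            rw [lb_one_eq_zero]; exact zero_mem S
          inv_mem' := by
            intro a ha
            show a⁻¹ ∈ S
            rw [← lb_inv_eq]
            exact hlam_mem _ (neg_mem ha) }
      have hsub : braceClosure x₀ ⊆ (S : Set A) :=
        Set.sInter_subset_of_mem ⟨⟨S, Sm, rfl, rfl⟩, AddSubgroup.subset_closure hx0X⟩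
      rw [hx₀] at hsub
      have huniv : (S : Set A) = Set.univ := Set.univ_subset_iff.mp hsub
      exact SetLike.coe_injective (by rw [huniv]; rfl)
    have hnt : X.Nontrivial := by
      by_contra hns
      rw [Set.not_nontrivial_iff] at hns
      have hfix : ∀ a : A, lam a x₀ = x₀ := fun a => hns (hinvX a hx0X) hx0X
      have hall : ∀ a b : A, lam a b = b := by
        intro a b
        have hb : b ∈ AddSubgroup.closure X := by rw [hcl]; trivial
        induction hb using AddSubgroup.closure_induction with
        | mem x hx =>
          have hx0 : x = x₀ := hns hx hx0X
          rw [hx0]; exact hfix a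
        | zero => exact lam_zero_apply a
        | add x y _ _ hx hy => rw [lam_add_apply, hx, hy]
        | neg x _ hx => rw [lam_neg_apply, hx]
      have h1u : socSeq A 1 = Set.univ := by
        rw [Set.eq_univ_iff_forall]
        intro a
        show ∀ b, a + b - a * b ∈ socSeq A 0
        intro b
        rw [lb_mul_eq, hall a b]
        show _ ∈ ({0} : Set A)
        simp
      exact hmlt 1 one_lt_two h1u
    have hone : ∀ x ∈ X, ∀ y ∈ X, lam x = lam y := by
      rintro x ⟨a, rfl⟩ y ⟨b, rfl⟩
      show lam (lam a x₀) = lam (lam b x₀)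
      rw [lamlam, lamlam]
    have hmulmem : ∀ x y : ↥X, (lam (x : A)).symm (y : A) ∈ X := fun x y => by
      rw [lam_symm_apply]; exact hinvX _ y.2
    let m : ↥X → ↥X → ↥X := fun x y => ⟨(lam (x : A)).symm (y : A), hmulmem x y⟩
    have hmbij : ∀ x, Function.Bijective (m x) := by
      intro x
      constructor
      · intro y z h
        exact Subtype.ext ((lam (x : A)).symm.injective (congrArg Subtype.val h))
      · intro z
        exact ⟨⟨lam (x : A) (z : A), hinvX _ z.2⟩, Subtype.ext (Equiv.symm_apply_apply _ _)⟩
    have hmcyc : ∀ x y z, m (m x y) (m x z) = m (m y x) (m y z) := by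
      intro x y z
      apply Subtype.ext
      show (lam ((lam (x:A)).symm (y:A))).symm ((lam (x:A)).symm (z:A)) =
        (lam ((lam (y:A)).symm (x:A))).symm ((lam (y:A)).symm (z:A))
      rw [cyc_key, cyc_key, add_comm]
    have hmnd : Function.Bijective (fun x => m x x) := by
      constructor
      · intro x y h
        have hc := congrArg Subtype.val h
        simp only [m] at hc
        rw [lam_symm_apply, lam_symm_apply, lam_inv_self, lam_inv_self] at hc
        exact Subtype.ext (inv_injective (neg_injective hc))
      · intro y
        have hxy : lam (-(y:A))⁻¹ (y : A) = (-(y:A))⁻¹ := by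
          have h := lb_inv_eq (-(y : A))
          rwa [neg_neg] at h
        have hxX : (-(y:A))⁻¹ ∈ X := by rw [← hxy]; exact hinvX _ y.2
        refine ⟨⟨(-(y:A))⁻¹, hxX⟩, Subtype.ext ?_⟩
        show (lam ((-(y:A))⁻¹)).symm ((-(y:A))⁻¹) = (y : A)
        rw [lam_symm_apply, lam_inv_self, inv_inv, neg_neg]
    let C : CycleSet ↥X := ⟨m, hmbij, hmcyc, hmnd⟩
    have hCmul : ∀ x y : ↥X, ((C.mul x y : ↥X) : A) = (lam (x : A)).symm (y : A) :=
      fun x y => rfl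
    have hsig : ∀ (x z : ↥X), ((C.sigma x z : ↥X) : A) = (lam (x : A)).symm (z : A) :=
      fun x z => rfl
    have hGmem : ∀ x : ↥X, C.sigma x ∈ C.G := fun x => Subgroup.subset_closure ⟨x, rfl⟩
    have P : ∀ a : A, ∃ g ∈ C.G, ∀ z : ↥X, ((g z : ↥X) : A) = lam a (z : A) := by
      intro a
      have ha : a ∈ AddSubgroup.closure X := by rw [hcl]; trivial
      induction ha using AddSubgroup.closure_induction with
      | mem x hx =>
        refine ⟨(C.sigma ⟨x, hx⟩)⁻¹, inv_mem (hGmem _), fun z => ?_⟩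
        have h2 := hsig ⟨x, hx⟩ ((C.sigma ⟨x, hx⟩)⁻¹ z)
        rw [← Equiv.Perm.mul_apply, mul_inv_cancel, Equiv.Perm.one_apply] at h2
        rw [h2, Equiv.apply_symm_apply]
      | zero => exact ⟨1, one_mem _, fun z => by rw [lam_zero]; rfl⟩
      | add a b _ _ ha hb =>
        obtain ⟨g, hg, hga⟩ := ha
        obtain ⟨k, hk, hkb⟩ := hb
        refine ⟨g * k, mul_mem hg hk, fun z => ?_⟩
        rw [Equiv.Perm.mul_apply, hga, hkb, ladd, Equiv.Perm.mul_apply]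
      | neg a _ ha =>
        obtain ⟨g, hg, hga⟩ := ha
        refine ⟨g⁻¹, inv_mem hg, fun z => ?_⟩
        have h2 := hga (g⁻¹ z)
        rw [← Equiv.Perm.mul_apply, mul_inv_cancel, Equiv.Perm.one_apply] at h2
        rw [lneg, h2, ← Equiv.Perm.mul_apply, inv_mul_cancel, Equiv.Perm.one_apply]
    refine ⟨X, ⟨x₀, hx0X, rfl⟩, hcl, hnt, C, hCmul, ?_, ?_⟩
    · intro u v
      obtain ⟨a, ha⟩ := u.2
      obtain ⟨b, hb⟩ := v.2
      obtain ⟨g, hg, hga⟩ := P a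
      obtain ⟨k, hk, hkb⟩ := P b
      refine ⟨k * g⁻¹, mul_mem hk (inv_mem hg), ?_⟩
      apply Subtype.ext
      rw [Equiv.Perm.mul_apply, hkb]
      have h2 := hga (g⁻¹ u)
      rw [← Equiv.Perm.mul_apply, mul_inv_cancel, Equiv.Perm.one_apply] at h2
      have h3 : ((g⁻¹ u : ↥X) : A) = x₀ := by
        apply (lam a).injective
        rw [← h2]
        exact ha.symm
      rw [h3]
      exact hb
    · constructor
      · intro p q
        show ∀ z, C.mul p z = C.mul q z
        intro z
        apply Subtype.ext
        rw [hCmul, hCmul]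
        have h := hone _ p.2 _ q.2
        rw [h]
      · intro mm hmm
        have hm0 : mm = 0 := by omega
        subst hm0
        obtain ⟨p, hp, q, hq, hpq⟩ := hnt
        exact ⟨⟨p, hp⟩, ⟨q, hq⟩, fun h => hpq (congrArg Subtype.val (h : (⟨p, hp⟩ : ↥X) = ⟨q, hq⟩))⟩
  · rintro ⟨X, ⟨e, he, hXe⟩, hcl, hnt, C, hC, hind, hmpl⟩
    have hinvX : ∀ (a : A) ⦃x⦄, x ∈ X → lam a x ∈ X := by
      intro a x hx
      rw [hXe] at hx ⊢
      exact mem_range_lam a x hx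
    have hone : ∀ x ∈ X, ∀ y ∈ X, lam x = lam y := by
      intro x hx y hy
      have h1 : ∀ z : ↥X, C.mul ⟨x, hx⟩ z = C.mul ⟨y, hy⟩ z := hmpl.1 ⟨x, hx⟩ ⟨y, hy⟩
      have h3 : lam x⁻¹ = lam y⁻¹ := by
        apply lam_ext_of_closure hcl
        intro z hz
        have h2 := congrArg Subtype.val (h1 ⟨z, hz⟩)
        rw [hC, hC] at h2
        rw [← lam_symm_apply, ← lam_symm_apply]
        exact h2
      rw [lam_inv, lam_inv] at h3
      exact inv_injective h3
    have hsoc := soc_of_base hXe hcl hone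
    obtain ⟨p, hp, q, hq, hpq⟩ := hnt
    refine ⟨⟨e, ?_⟩, soc2_of_hsoc hsoc, ?_⟩
    · -- braceClosure e = univ
      rw [Set.eq_univ_iff_forall]
      intro a
      show a ∈ ⋂₀ {B : Set A | IsSubBrace B ∧ e ∈ B}
      rw [Set.mem_sInter]
      rintro B ⟨⟨Sa, Sm, hSa, hSm⟩, heB⟩
      have memB_add : ∀ u v : A, u ∈ B → v ∈ B → u + v ∈ B := by
        intro u v hu hv
        rw [← hSa] at hu hv ⊢
        exact add_mem hu hv
      have memB_neg : ∀ u : A, u ∈ B → -u ∈ B := by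
        intro u hu
        rw [← hSa] at hu ⊢
        exact neg_mem hu
      have memB_mul : ∀ u v : A, u ∈ B → v ∈ B → u * v ∈ B := by
        intro u v hu hv
        rw [← hSm] at hu hv ⊢
        exact mul_mem hu hv
      have memB_invm : ∀ u : A, u ∈ B → u⁻¹ ∈ B := by
        intro u hu
        rw [← hSm] at hu ⊢
        exact inv_mem hu
      have hBfwd : ∀ b ∈ B, lam e b ∈ B := by
        intro b hb
        rw [lam_apply]
        exact memB_add _ _ (memB_neg e heB) (memB_mul e b heB hb)
      have hBbwd : ∀ b ∈ B, (lam e).symm b ∈ B := by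
        intro b hb
        rw [lam_symm_apply, lam_apply]
        exact memB_add _ _ (memB_neg _ (memB_invm e heB)) (memB_mul _ b (memB_invm e heB) hb)
      have hXB : X ⊆ B := by
        intro y hy
        obtain ⟨g, hg, hgy⟩ := hind ⟨e, he⟩ ⟨y, hy⟩
        have hgiff : ∀ z : ↥X, ((z : A) ∈ B ↔ ((g z : ↥X) : A) ∈ B) := by
          clear hgy
          induction hg using Subgroup.closure_induction with
          | mem s hs =>
            obtain ⟨x, rfl⟩ := hs
            intro z
            have hsx : C.sigma x z = C.sigma ⟨e, he⟩ z := hmpl.1 x ⟨e, he⟩ z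
            have hCz : ((C.sigma ⟨e, he⟩ z : ↥X) : A) = (lam e).symm (z : A) := hC ⟨e, he⟩ z
            rw [hsx, hCz]
            constructor
            · intro h
              exact hBbwd _ h
            · intro h
              have h2 := hBfwd _ h
              rwa [Equiv.apply_symm_apply] at h2
          | one => intro z; exact Iff.rfl
          | mul g k _ _ hgi hki =>
            intro z
            rw [Equiv.Perm.mul_apply]
            exact (hki z).trans (hgi (k z))
          | inv g _ hgi =>
            intro z
            have h2 := hgi (g⁻¹ z)
            rw [← Equiv.Perm.mul_apply, mul_inv_cancel, Equiv.Perm.one_apply] at h2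
            exact h2.symm
        have h3 := (hgiff ⟨e, he⟩).mp heB
        rw [hgy] at h3
        exact h3
      have hSaT : Sa = ⊤ := by
        have hle : AddSubgroup.closure X ≤ Sa := by
          rw [AddSubgroup.closure_le]
          rw [hSa]
          exact hXB
        rw [hcl] at hle
        exact top_le_iff.mp hle
      have : B = Set.univ := by rw [← hSa, hSaT]; rfl
      rw [this]
      trivial
    · -- minimality
      intro mm hmm
      have : mm = 0 ∨ mm = 1 := by omega
      rcases this with h0 | h1
      · subst h0
        intro hu
        have hp0 : p ∈ socSeq A 0 := by rw [hu]; trivial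
        have hq0 : q ∈ socSeq A 0 := by rw [hu]; trivial
        exact hpq ((show p = (0:A) from hp0).trans (show q = (0:A) from hq0).symm)
      · subst h1
        intro hu
        have hall : ∀ c d : A, lam c d = d := by
          intro c d
          have hc1 : c ∈ socSeq A 1 := by rw [hu]; trivial
          have h3 : c + d - c * d = 0 := hc1 d
          rw [lb_mul_eq] at h3
          have h4 : d - lam c d = 0 := by rw [← h3]; abel
          exact (sub_eq_zero.mp h4).symm
        rw [hXe] at hp hq
        obtain ⟨a, ha⟩ := hp
        obtain ⟨b, hb⟩ := hq
        apply hpq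
        rw [← ha, ← hb]
        show lam a e = lam b e
        rw [hall, hall]
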